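/- arXiv:2201.07595 — 2 statements merged into one kernel-verified Lean document; each statement's English description precedes it below -/
import Mathlib

section
/- Let G be a finite simple graph, let φ be a proper 5-coloring of G, and let v be a vertex of G of degree at most 4. For every sequence of m Kempe changes in G − v transforming φ restricted to V(G) − {v} into a proper 5-coloring ψ', there exists a sequence of at most 2m Kempe changes in G transforming φ into a proper 5-coloring ψ of G whose restriction to V(G) − {v} equals ψ'; moreover this sequence can be chosen so that every vertex other than v changes its color exactly as many times as in the given sequence in G − v, and v changes its color at most m times. -/
/-- `φ` is a proper `k`-coloring of `G`: adjacent vertices get different colors. -/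
def IsProperColoring {V : Type*} (G : SimpleGraph V) (k : ℕ) (φ : V → Fin k) : Prop :=
  ∀ ⦃u v : V⦄, G.Adj u v → φ u ≠ φ v

/-- The spanning subgraph of `G` keeping only edges between vertices colored `a` or `b`:
its connected components meeting the `a/b`-colored vertices are the Kempe chains. -/
def kempeSub {V : Type*} (G : SimpleGraph V) {k : ℕ} (φ : V → Fin k) (a b : Fin k) :
    SimpleGraph V where
  Adj x y := G.Adj x y ∧ (φ x = a ∨ φ x = b) ∧ (φ y = a ∨ φ y = b)
  symm := ⟨fun x y ⟨h, hx, hy⟩ => ⟨h.symm, hy, hx⟩⟩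
  loopless := ⟨fun x h => G.loopless.irrefl x h.1⟩

/-- `ψ` is obtained from `φ` by a single Kempe change in the pair of colors `{a, b}`:
the colors `a` and `b` are swapped on the Kempe chain containing some vertex `v`
colored `a` or `b`, and all other vertices keep their color. -/
def KempeStepAB {V : Type*} (G : SimpleGraph V) {k : ℕ} (a b : Fin k) (φ ψ : V → Fin k) :
    Prop :=
  a ≠ b ∧ ∃ v : V, (φ v = a ∨ φ v = b) ∧
    (∀ u : V, (kempeSub G φ a b).Reachable v u → ψ u = Equiv.swap a b (φ u)) ∧
    (∀ u : V, ¬ (kempeSub G φ a b).Reachable v u → ψ u = φ u)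

/-- `ψ` is obtained from `φ` by a single Kempe change (in some pair of colors). -/
def KempeStep {V : Type*} (G : SimpleGraph V) (k : ℕ) (φ ψ : V → Fin k) : Prop :=
  ∃ a b : Fin k, KempeStepAB G a b φ ψ

/-- The number of indices `i < m` at which the vertex `x` changes its color in the
sequence of colorings `σ 0, σ 1, …, σ m`. -/
def changeCount {W : Type*} {k : ℕ} (m : ℕ) (σ : ℕ → W → Fin k) (x : W) : ℕ :=
  ((Finset.range m).filter fun i => σ i x ≠ σ (i + 1) x).card

section Aux
variable {V : Type*}

lemma reachable_isolated {H : SimpleGraph V} {x u : V}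
    (hiso : ∀ y, ¬ H.Adj x y) (h : H.Reachable x u) : u = x := by
  obtain ⟨p⟩ := h
  cases p with
  | nil => rfl
  | cons h' p' => exact absurd h' (hiso _)

lemma reachable_of_induce {H : SimpleGraph V} {S : Set V} {x y : ↥S}
    (h : (H.induce S).Reachable x y) : H.Reachable x.val y.val :=
  h.map (SimpleGraph.Embedding.induce S).toHom

lemma reachable_induce_of_leaf {H : SimpleGraph V} {v : V}
    (hleaf : ∀ u1 u2, H.Adj v u1 → H.Adj v u2 → u1 = u2)
    {x y : V} (hx : x ≠ v) (hy : y ≠ v) (h : H.Reachable x y) :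
    (H.induce {z : V | z ≠ v}).Reachable ⟨x, hx⟩ ⟨y, hy⟩ := by
  suffices key : ∀ n (x y : V) (p : H.Walk x y) (hx : x ≠ v) (hy : y ≠ v), p.length ≤ n →
      (H.induce {z : V | z ≠ v}).Reachable ⟨x, hx⟩ ⟨y, hy⟩ by
    obtain ⟨p⟩ := h
    exact key p.length x y p hx hy le_rfl
  intro n
  induction n with
  | zero =>
    intro x y p hx hy hl
    cases p with
    | nil => exact SimpleGraph.Reachable.refl _
    | cons h' q => simp [SimpleGraph.Walk.length_cons] at hl
  | succ n ih =>
    intro x y p hx hy hl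
    cases p with
    | nil => exact SimpleGraph.Reachable.refl _
    | @cons _ z _ h' q =>
      by_cases hz : z = v
      · subst hz
        cases q with
        | nil => exact absurd rfl hy
        | @cons _ z' _ h'' q' =>
          have hxz : x = z' := hleaf x z' h'.symm h''
          subst hxz
          exact ih x y q' hx hy (by simp [SimpleGraph.Walk.length_cons] at hl; omega)
      · have hadj : (H.induce {z : V | z ≠ v}).Adj ⟨x, hx⟩ ⟨z, hz⟩ := h'
        exact hadj.reachable.trans
          (ih z y q hz hy (by simp [SimpleGraph.Walk.length_cons] at hl; omega))

lemma kempeStep_proper {k : ℕ} {H : SimpleGraph V} {φ ψ : V → Fin k}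
    (hφ : IsProperColoring H k φ) (h : KempeStep H k φ ψ) : IsProperColoring H k ψ := by
  obtain ⟨a, b, hab, w, hw, hin, hout⟩ := h
  have main : ∀ ⦃u u' : V⦄, H.Adj u u' → (kempeSub H φ a b).Reachable w u →
      ¬ (kempeSub H φ a b).Reachable w u' → ψ u ≠ ψ u' := by
    intro u u' hadj hr hr'
    rw [hin u hr, hout u' hr']
    by_cases hu : φ u = a ∨ φ u = b
    · have hu' : ¬(φ u' = a ∨ φ u' = b) := fun hcon =>
        hr' (hr.trans (SimpleGraph.Adj.reachable ⟨hadj, hu, hcon⟩))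
      push_neg at hu'
      rcases hu with h1 | h1 <;> rw [h1]
      · rw [Equiv.swap_apply_left]; exact fun hc => hu'.2 hc.symm
      · rw [Equiv.swap_apply_right]; exact fun hc => hu'.1 hc.symm
    · push_neg at hu
      rw [Equiv.swap_apply_of_ne_of_ne hu.1 hu.2]
      exact hφ hadj
  intro u u' hadj
  by_cases h1 : (kempeSub H φ a b).Reachable w u <;>
    by_cases h2 : (kempeSub H φ a b).Reachable w u'
  · rw [hin u h1, hin u' h2]
    exact fun hc => hφ hadj ((Equiv.swap a b).injective hc)
  · exact main hadj h1 h2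
  · exact (main hadj.symm h2 h1).symm
  · rw [hout u h1, hout u' h2]; exact hφ hadj

lemma changeCount_zero {W : Type*} {k : ℕ} (σ : ℕ → W → Fin k) (x : W) :
    changeCount 0 σ x = 0 := by simp [changeCount]

lemma changeCount_succ {W : Type*} {k : ℕ} (n : ℕ) (σ : ℕ → W → Fin k) (x : W) :
    changeCount (n + 1) σ x
      = changeCount n σ x + (if σ n x ≠ σ (n + 1) x then 1 else 0) := by
  unfold changeCount
  rw [Finset.range_add_one, Finset.filter_insert]
  split
  · rw [Finset.card_insert_of_notMem (by simp)]
  · simp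

lemma changeCount_one {W : Type*} {k : ℕ} (σ : ℕ → W → Fin k) (x : W) :
    changeCount 1 σ x = if σ 0 x ≠ σ 1 x then 1 else 0 := by
  rw [show (1 : ℕ) = 0 + 1 from rfl, changeCount_succ, changeCount_zero, Nat.zero_add]

lemma changeCount_two {W : Type*} {k : ℕ} (σ : ℕ → W → Fin k) (x : W) :
    changeCount 2 σ x
      = (if σ 0 x ≠ σ 1 x then 1 else 0) + (if σ 1 x ≠ σ 2 x then 1 else 0) := by
  rw [show (2 : ℕ) = 1 + 1 from rfl, changeCount_succ, changeCount_one]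

lemma changeCount_le {W : Type*} {k : ℕ} (n : ℕ) (σ : ℕ → W → Fin k) (x : W) :
    changeCount n σ x ≤ n :=
  (Finset.card_filter_le _ _).trans (Finset.card_range n).le

lemma changeCount_congr {W : Type*} {k : ℕ} {n : ℕ} {σ σ₂ : ℕ → W → Fin k} (x : W)
    (h : ∀ j ≤ n, σ j = σ₂ j) : changeCount n σ x = changeCount n σ₂ x := by
  unfold changeCount
  congr 1
  refine Finset.filter_congr fun i hi => ?_
  rw [Finset.mem_range] at hi
  rw [h i (by omega), h (i + 1) (by omega)]

lemma changeCount_add {W : Type*} {k : ℕ} (m t : ℕ) (ξ θ : ℕ → W → Fin k)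
    (hθ : ∀ j, ξ (m + j) = θ j) (x : W) :
    changeCount (m + t) ξ x = changeCount m ξ x + changeCount t θ x := by
  induction t with
  | zero => simp [changeCount_zero]
  | succ t ih =>
    rw [show m + (t + 1) = (m + t) + 1 from rfl, changeCount_succ, ih,
      changeCount_succ, hθ t, show m + t + 1 = m + (t + 1) from rfl, hθ (t + 1),
      Nat.add_assoc]

end Aux

section Lift
variable {V : Type*}

lemma kempeSub_induce (G : SimpleGraph V) (v : V) (ρ : V → Fin 5) (a b : Fin 5) :
    kempeSub (G.induce {x : V | x ≠ v}) (fun x => ρ x.val) a b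
      = (kempeSub G ρ a b).induce {x : V | x ≠ v} := by
  ext x y
  rfl

lemma swap_step_lift [DecidableEq V] (G : SimpleGraph V) (v : V)
    {a b : Fin 5} (ρ : V → Fin 5) (τ' : ↥{x : V | x ≠ v} → Fin 5)
    (hleaf : ∀ u1 u2, (kempeSub G ρ a b).Adj v u1 → (kempeSub G ρ a b).Adj v u2 → u1 = u2)
    (h : KempeStepAB (G.induce {x : V | x ≠ v}) a b (fun x => ρ x.val) τ') :
    ∃ ψ : V → Fin 5, KempeStepAB G a b ρ ψ ∧ (∀ x : ↥{x : V | x ≠ v}, ψ x.val = τ' x) ∧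
      ((∀ u, ¬ (kempeSub G ρ a b).Adj v u) → ψ v = ρ v) := by
  classical
  obtain ⟨hab, w, hw, hin, hout⟩ := h
  rw [kempeSub_induce] at hin hout
  set K := kempeSub G ρ a b with hK
  set ψ : V → Fin 5 := fun u =>
    if hu : u = v then (if K.Reachable w.val v then Equiv.swap a b (ρ v) else ρ v)
    else τ' ⟨u, hu⟩ with hψ
  have hres : ∀ x : ↥{x : V | x ≠ v}, ψ x.val = τ' x := by
    intro x
    simp only [hψ, dif_neg x.prop]
  have hwv : w.val ≠ v := w.prop
  refine ⟨ψ, ⟨hab, w.val, hw, ?_, ?_⟩, hres, ?_⟩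
  · intro u hr
    by_cases hu : u = v
    · subst hu
      simp only [hψ, dif_pos rfl, if_pos (show K.Reachable _ _ from hr)]
    · have hr' : (K.induce {z : V | z ≠ v}).Reachable ⟨w.val, hwv⟩ ⟨u, hu⟩ :=
        reachable_induce_of_leaf hleaf hwv hu hr
      rw [hres ⟨u, hu⟩]
      exact hin ⟨u, hu⟩ (by simpa using hr')
  · intro u hr
    by_cases hu : u = v
    · subst hu
      simp only [hψ, dif_pos rfl, if_neg (show ¬ K.Reachable _ _ from hr)]
    · have hr' : ¬ (K.induce {z : V | z ≠ v}).Reachable ⟨w.val, hwv⟩ ⟨u, hu⟩ := by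
        intro hcon
        exact hr (reachable_of_induce hcon)
      rw [hres ⟨u, hu⟩]
      exact hout ⟨u, hu⟩ (by simpa using hr')
  · intro hiso
    have : ¬ K.Reachable w.val v := by
      intro hcon
      exact hwv (reachable_isolated hiso hcon.symm)
    simp only [hψ, dif_pos rfl, if_neg this]

end Lift

lemma lift_one {V : Type*} [Fintype V] [DecidableEq V]
    (G : SimpleGraph V) [DecidableRel G.Adj] (v : V) (hv : G.degree v ≤ 4)
    (ρ : V → Fin 5) (hρ : IsProperColoring G 5 ρ) (τ' : ↥{x : V | x ≠ v} → Fin 5)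
    (h : KempeStep (G.induce {x : V | x ≠ v}) 5 (fun x => ρ x.val) τ') :
    ∃ (t : ℕ) (θ : ℕ → V → Fin 5), (t = 1 ∨ t = 2) ∧ θ 0 = ρ ∧
      (∀ j < t, KempeStep G 5 (θ j) (θ (j + 1))) ∧
      IsProperColoring G 5 (θ t) ∧
      (∀ x : ↥{x : V | x ≠ v}, θ t x.val = τ' x) ∧
      (∀ x : ↥{x : V | x ≠ v},
        changeCount t θ x.val = if τ' x ≠ ρ x.val then 1 else 0) ∧
      changeCount t θ v ≤ 1 := by
  classical
  obtain ⟨a, b, hAB⟩ := h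
  by_cases hcase : ∃ u1 u2, u1 ≠ u2 ∧ (kempeSub G ρ a b).Adj v u1 ∧ (kempeSub G ρ a b).Adj v u2
  · -- v has two distinct Kempe neighbors: find a free color, recolor v first.
    obtain ⟨u1, u2, hu12, hadj1, hadj2⟩ := hcase
    obtain ⟨hG1, hvab, hu1ab⟩ := hadj1
    obtain ⟨hG2, -, hu2ab⟩ := hadj2
    -- a free color exists
    have hfree : ∃ c : Fin 5, c ≠ a ∧ c ≠ b ∧ ∀ u, G.Adj v u → ρ u ≠ c := by
      by_contra hcon
      push_neg at hcon
      have hcard : 5 ≤ (G.neighborFinset v).card := by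
        have hsplit := Finset.card_filter_add_card_filter_not
          (s := G.neighborFinset v) (p := fun u => ρ u = a ∨ ρ u = b)
        have h2 : 2 ≤ ((G.neighborFinset v).filter (fun u => ρ u = a ∨ ρ u = b)).card := by
          have hsub : ({u1, u2} : Finset V) ⊆
              (G.neighborFinset v).filter (fun u => ρ u = a ∨ ρ u = b) := by
            intro u hu
            simp only [Finset.mem_insert, Finset.mem_singleton] at hu
            rcases hu with rfl | rfl <;>
              simp [SimpleGraph.mem_neighborFinset, hG1, hG2, hu1ab, hu2ab]
          calc 2 = ({u1, u2} : Finset V).card := (Finset.card_pair hu12).symm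
            _ ≤ _ := Finset.card_le_card hsub
        have h3 : 3 ≤ ((G.neighborFinset v).filter (fun u => ¬(ρ u = a ∨ ρ u = b))).card := by
          have hsub : (Finset.univ.filter (fun c : Fin 5 => c ≠ a ∧ c ≠ b)) ⊆
              ((G.neighborFinset v).filter (fun u => ¬(ρ u = a ∨ ρ u = b))).image ρ := by
            intro c hc
            simp only [Finset.mem_filter, Finset.mem_univ, true_and] at hc
            obtain ⟨u, hu, huc⟩ := hcon c hc.1 hc.2
            refine Finset.mem_image.2 ⟨u, ?_, huc⟩
            simp only [Finset.mem_filter, SimpleGraph.mem_neighborFinset]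
            refine ⟨hu, ?_⟩
            rw [huc]
            push_neg
            exact hc
          have hT : (Finset.univ.filter (fun c : Fin 5 => c ≠ a ∧ c ≠ b)).card = 3 := by
            have : (Finset.univ.filter (fun c : Fin 5 => c ≠ a ∧ c ≠ b))
                = ({a, b} : Finset (Fin 5))ᶜ := by
              ext c
              simp [not_or]
            rw [this, Finset.card_compl, Finset.card_pair hAB.1]
            rfl
          calc 3 = _ := hT.symm
            _ ≤ _ := Finset.card_le_card hsub
            _ ≤ _ := Finset.card_image_le
        omega
      have : G.degree v = (G.neighborFinset v).card := rfl
      omega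
    obtain ⟨c, hca, hcb, hcfree⟩ := hfree
    have hvc : ρ v ≠ c := by
      rcases hvab with h1 | h1 <;> rw [h1]
      · exact fun hc => hca hc.symm
      · exact fun hc => hcb hc.symm
    set ρm : V → Fin 5 := Function.update ρ v c with hρm
    have hρmv : ρm v = c := Function.update_self v c ρ
    have hρmne : ∀ u, u ≠ v → ρm u = ρ u := fun u hu => Function.update_of_ne hu c ρ
    -- step 1 : recolor v to c
    have hiso1 : ∀ u, ¬ (kempeSub G ρ (ρ v) c).Adj v u := by
      rintro u ⟨hGu, -, hu⟩
      rcases hu with h1 | h1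
      · exact hρ hGu h1.symm
      · exact hcfree u hGu h1
    have step1 : KempeStepAB G (ρ v) c ρ ρm := by
      refine ⟨hvc, v, Or.inl rfl, ?_, ?_⟩
      · intro u hr
        have := reachable_isolated hiso1 hr
        subst this
        rw [hρmv, Equiv.swap_apply_left]
      · intro u hr
        have hu : u ≠ v := by
          rintro rfl
          exact hr (SimpleGraph.Reachable.refl _)
        exact hρmne u hu
    have hρmproper : IsProperColoring G 5 ρm :=
      kempeStep_proper hρ ⟨ρ v, c, step1⟩
    -- step 2 : the Kempe change itself; v is now isolated in the a/b Kempe subgraph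
    have hiso2 : ∀ u, ¬ (kempeSub G ρm a b).Adj v u := by
      rintro u ⟨-, hvm, -⟩
      rw [hρmv] at hvm
      rcases hvm with h1 | h1
      · exact hca h1
      · exact hcb h1
    have hAB' : KempeStepAB (G.induce {x : V | x ≠ v}) a b (fun x => ρm x.val) τ' := by
      have : (fun x : ↥{x : V | x ≠ v} => ρm x.val) = (fun x => ρ x.val) := by
        funext x
        exact hρmne x.val x.prop
      rw [this]
      exact hAB
    obtain ⟨ψ, hψAB, hψres, hψiso⟩ := swap_step_lift G v ρm τ'
      (fun u1 u2 h1 h2 => absurd h1 (hiso2 u1)) hAB'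
    have hψv : ψ v = ρm v := hψiso hiso2
    have hψproper : IsProperColoring G 5 ψ := kempeStep_proper hρmproper ⟨a, b, hψAB⟩
    set θ : ℕ → V → Fin 5 := fun j => if j = 0 then ρ else if j = 1 then ρm else ψ with hθ
    have hθ0 : θ 0 = ρ := rfl
    have hθ1 : θ 1 = ρm := rfl
    have hθ2 : θ 2 = ψ := rfl
    refine ⟨2, θ, Or.inr rfl, hθ0, ?_, ?_, ?_, ?_, ?_⟩
    · intro j hj
      interval_cases j
      · rw [hθ0, show (0:ℕ)+1 = 1 from rfl, hθ1]
        exact ⟨ρ v, c, step1⟩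
      · rw [hθ1, show (1:ℕ)+1 = 2 from rfl, hθ2]
        exact ⟨a, b, hψAB⟩
    · rw [hθ2]
      exact hψproper
    · intro x
      rw [hθ2]
      exact hψres x
    · intro x
      rw [changeCount_two, hθ0, hθ1, hθ2, hρmne x.val x.prop, hψres x]
      rcases eq_or_ne (τ' x) (ρ x.val) with he | he
      · simp [he]
      · rw [if_pos (Ne.symm he), if_pos he, if_neg (by simp)]
    · rw [changeCount_two, hθ0, hθ1, hθ2, hψv,
        if_neg (show ¬(ρm v ≠ ρm v) from fun hc => hc rfl)]
      split <;> norm_num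
  · -- v has at most one Kempe neighbor: lift the change directly.
    push_neg at hcase
    have hleaf : ∀ u1 u2, (kempeSub G ρ a b).Adj v u1 → (kempeSub G ρ a b).Adj v u2 →
        u1 = u2 := by
      intro u1 u2 h1 h2
      by_contra hne
      exact (hcase u1 u2 hne h1) h2
    obtain ⟨ψ, hψAB, hψres, -⟩ := swap_step_lift G v ρ τ' hleaf hAB
    have hψproper : IsProperColoring G 5 ψ := kempeStep_proper hρ ⟨a, b, hψAB⟩
    set θ : ℕ → V → Fin 5 := fun j => if j = 0 then ρ else ψ with hθ
    have hθ0 : θ 0 = ρ := rfl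
    have hθ1 : θ 1 = ψ := rfl
    refine ⟨1, θ, Or.inl rfl, hθ0, ?_, ?_, ?_, ?_, ?_⟩
    · intro j hj
      interval_cases j
      rw [hθ0, show (0:ℕ)+1 = 1 from rfl, hθ1]
      exact ⟨a, b, hψAB⟩
    · rw [hθ1]
      exact hψproper
    · intro x
      rw [hθ1]
      exact hψres x
    · intro x
      rw [changeCount_one, hθ0, hθ1, hψres x]
      rcases eq_or_ne (τ' x) (ρ x.val) with he | he
      · simp [he]
      · rw [if_pos (Ne.symm he), if_pos he]
    · exact (changeCount_le 1 _ v)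


/-- If `v` has degree at most `4` in `G` and `φ` is a proper
`5`-coloring of `G`, then every sequence of `m` Kempe changes in `G - v` starting from
the restriction of `φ` lifts to a sequence of at most `2m` Kempe changes in `G` starting
from `φ`, ending at a proper `5`-coloring restricting to the final coloring in `G - v`,
in which every vertex other than `v` changes its color exactly as many times as in the
given sequence and `v` changes its color at most `m` times. -/
theorem lift_sequence_low_degree_vertex {V : Type*} [Fintype V] [DecidableEq V]
    (G : SimpleGraph V) [DecidableRel G.Adj] (v : V) (hv : G.degree v ≤ 4)
    (φ : V → Fin 5) (hφ : IsProperColoring G 5 φ)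
    (m : ℕ) (σ' : ℕ → ↥{x : V | x ≠ v} → Fin 5)
    (h0 : σ' 0 = fun x => φ x.val)
    (hstep : ∀ i < m, KempeStep (G.induce {x : V | x ≠ v}) 5 (σ' i) (σ' (i + 1))) :
    ∃ (m' : ℕ) (σ : ℕ → V → Fin 5),
      m' ≤ 2 * m ∧
      σ 0 = φ ∧
      IsProperColoring G 5 (σ m') ∧
      (∀ x : ↥{x : V | x ≠ v}, σ m' x.val = σ' m x) ∧
      (∀ i < m', KempeStep G 5 (σ i) (σ (i + 1))) ∧
      (∀ x : ↥{x : V | x ≠ v}, changeCount m' σ x.val = changeCount m σ' x) ∧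
      changeCount m' σ v ≤ m := by
  induction m with
  | zero =>
    refine ⟨0, fun _ => φ, le_refl _, rfl, hφ, ?_, ?_, ?_, ?_⟩
    · intro x
      rw [h0]
    · intro i hi
      omega
    · intro x
      rw [changeCount_zero, changeCount_zero]
    · rw [changeCount_zero]
  | succ m IH =>
    obtain ⟨m', σ, hm', hσ0, hprop, hres, hsteps, hcc, hccv⟩ :=
      IH (fun i hi => hstep i (Nat.lt_succ_of_lt hi))
    have hcur : (fun x : ↥{x : V | x ≠ v} => σ m' x.val) = σ' m := funext fun x => hres x
    have hstepm := hstep m (Nat.lt_succ_self m)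
    rw [← hcur] at hstepm
    obtain ⟨t, θ, ht, hθ0, hθsteps, hθprop, hθres, hθcc, hθccv⟩ :=
      lift_one G v hv (σ m') hprop (σ' (m + 1)) hstepm
    set ξ : ℕ → V → Fin 5 := fun j => if j < m' then σ j else θ (j - m') with hξ
    have hagree : ∀ j ≤ m', ξ j = σ j := by
      intro j hj
      rcases lt_or_eq_of_le hj with hj | hj
      · simp [hξ, hj]
      · subst hj
        simp [hξ, hθ0]
    have hshift : ∀ j, ξ (m' + j) = θ j := by
      intro j
      simp only [hξ]
      rw [if_neg (by omega), Nat.add_sub_cancel_left]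
    refine ⟨m' + t, ξ, by omega, ?_, ?_, ?_, ?_, ?_, ?_⟩
    · rw [hagree 0 (Nat.zero_le _), hσ0]
    · rw [hshift t]
      exact hθprop
    · intro x
      rw [hshift t]
      exact hθres x
    · intro i hi
      by_cases hilt : i + 1 ≤ m'
      · rw [hagree i (by omega), hagree (i + 1) hilt]
        exact hsteps i (by omega)
      · have h1 : ξ i = θ (i - m') := by
          simp only [hξ]
          rw [if_neg (by omega)]
        have h2 : ξ (i + 1) = θ (i - m' + 1) := by
          simp only [hξ]
          rw [if_neg (by omega), show i + 1 - m' = i - m' + 1 by omega]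
        rw [h1, h2]
        exact hθsteps (i - m') (by omega)
    · intro x
      rw [changeCount_add m' t ξ θ hshift, changeCount_congr x.val hagree, hcc x,
        changeCount_succ, hθcc x, hres x]
      rcases eq_or_ne (σ' (m + 1) x) (σ' m x) with he | he
      · simp [he]
      · rw [if_pos he, if_pos (Ne.symm he)]
    · calc changeCount (m' + t) ξ v
          = changeCount m' ξ v + changeCount t θ v := changeCount_add m' t ξ θ hshift v
        _ = changeCount m' σ v + changeCount t θ v := by
            rw [changeCount_congr v hagree]
        _ ≤ m + 1 := by omega
end

section
/- Let G be a finite simple graph, let u and w be distinct nonadjacent vertices of G, and let φ be a proper k-coloring of G with φ(u) = φ(w). Let G' be the graph obtained from G by identifying u and w into a single vertex (with an edge between two vertices of G' whenever some pair of their preimages is adjacent in G), and let φ' be the induced coloring of G' (which is a proper k-coloring). If ψ' is obtained from φ' by a single Kempe change in colors {a, b}, then the lifted coloring ψ of G, defined by ψ(x) = ψ'(image of x), is a proper k-coloring of G, and ψ is obtained from φ by a sequence of Kempe changes in colors {a, b}, namely by swapping a and b on every Kempe chain of G contained in the preimage of the changed chain of G'. In particular each vertex of G changes its color at most once, and it changes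 its color if and only if its image in G' does. -/
/-- The map sending `x` to `u` if `x = w`, and to itself otherwise. -/
def mergeMap {V : Type*} [DecidableEq V] (u w : V) (x : V) : V := if x = w then u else x

/-- The graph obtained from `G` by identifying the vertices `u` and `w` into the single
vertex `u`: two (distinct) vertices are adjacent iff some pair of their preimages under
`mergeMap u w` is adjacent in `G`.  (The vertex `w` is left isolated; the identified
graph `G'` proper is the induced subgraph on `{y | y ≠ w}`.) -/
def mergeGraph {V : Type*} [DecidableEq V] (G : SimpleGraph V) (u w : V) :
    SimpleGraph V where
  Adj a b := a ≠ b ∧ ∃ x y, G.Adj x y ∧ mergeMap u w x = a ∧ mergeMap u w y = b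
  symm := ⟨fun a b ⟨hab, x, y, h, hx, hy⟩ => ⟨hab.symm, y, x, h.symm, hy, hx⟩⟩
  loopless := ⟨fun a h => h.1 rfl⟩

/-- The quotient map from `V(G)` to the vertex set of the identified graph. -/
def mergeTo {V : Type*} [DecidableEq V] (u w : V) (huw : u ≠ w) (x : V) :
    ↥{y : V | y ≠ w} :=
  if h : x = w then ⟨u, huw⟩ else ⟨x, h⟩

section auxlemmas

variable {V : Type*} {G : SimpleGraph V} {k : ℕ} {φ ψ : V → Fin k} {a b : Fin k}

lemma swap_mem_iff {k : ℕ} (a b c : Fin k) :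
    (Equiv.swap a b c = a ∨ Equiv.swap a b c = b) ↔ (c = a ∨ c = b) := by
  constructor
  · rintro (h | h)
    · exact Or.inr ((Equiv.swap a b).injective (h.trans (Equiv.swap_apply_right a b).symm))
    · exact Or.inl ((Equiv.swap a b).injective (h.trans (Equiv.swap_apply_left a b).symm))
  · rintro (h | h)
    · rw [h]; exact Or.inr (Equiv.swap_apply_left a b)
    · rw [h]; exact Or.inl (Equiv.swap_apply_right a b)

lemma kempe_color_mem {x y : V} (h : (kempeSub G φ a b).Reachable x y)
    (hx : φ x = a ∨ φ x = b) : φ y = a ∨ φ y = b := by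
  obtain ⟨p⟩ := h
  induction p with
  | nil => exact hx
  | cons h p ih => exact ih h.2.2

lemma kempe_step_proper (hφ : IsProperColoring G k φ)
    (h : KempeStepAB G a b φ ψ) : IsProperColoring G k ψ := by
  obtain ⟨hab, v, hv, hin, hout⟩ := h
  intro p q hpq
  by_cases hp : (kempeSub G φ a b).Reachable v p <;>
    by_cases hq : (kempeSub G φ a b).Reachable v q
  · rw [hin p hp, hin q hq]
    exact fun e => hφ hpq ((Equiv.swap a b).injective e)
  · rw [hin p hp, hout q hq]
    have hpc : φ p = a ∨ φ p = b := kempe_color_mem hp hv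
    have hqc : ¬ (φ q = a ∨ φ q = b) := fun hqc =>
      hq (hp.trans ⟨SimpleGraph.Walk.cons ⟨hpq, hpc, hqc⟩ SimpleGraph.Walk.nil⟩)
    have hm : Equiv.swap a b (φ p) = a ∨ Equiv.swap a b (φ p) = b :=
      (swap_mem_iff a b _).mpr hpc
    intro e; exact hqc (e ▸ hm)
  · rw [hout p hp, hin q hq]
    have hqc : φ q = a ∨ φ q = b := kempe_color_mem hq hv
    have hpc : ¬ (φ p = a ∨ φ p = b) := fun hpc =>
      hp (hq.trans ⟨SimpleGraph.Walk.cons ⟨hpq.symm, hqc, hpc⟩ SimpleGraph.Walk.nil⟩)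
    have hm : Equiv.swap a b (φ q) = a ∨ Equiv.swap a b (φ q) = b :=
      (swap_mem_iff a b _).mpr hqc
    intro e; exact hpc (e.symm ▸ hm)
  · rw [hout p hp, hout q hq]; exact hφ hpq

end auxlemmas

lemma exists_kempe_seq {V : Type*} [Fintype V] [DecidableEq V]
    (G : SimpleGraph V) {k : ℕ} (φ : V → Fin k) (a b : Fin k) (hab : a ≠ b)
    (S : Set V) (hScol : ∀ x ∈ S, φ x = a ∨ φ x = b)
    (hSclosed : ∀ x ∈ S, ∀ y, (kempeSub G φ a b).Adj x y → y ∈ S)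
    (ψ : V → Fin k) (hψin : ∀ x ∈ S, ψ x = Equiv.swap a b (φ x))
    (hψout : ∀ x ∉ S, ψ x = φ x) :
    ∃ (m : ℕ) (σ : ℕ → V → Fin k),
      σ 0 = φ ∧ σ m = ψ ∧
      (∀ i < m, KempeStepAB G a b (σ i) (σ (i + 1))) ∧
      (∀ x : V, changeCount m σ x ≤ 1) := by
  classical
  set H := kempeSub G φ a b with hH
  have hSreach : ∀ x ∈ S, ∀ y, H.Reachable x y → y ∈ S := by
    intro x hx y hr
    obtain ⟨p⟩ := hr
    induction p with
    | nil => exact hx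
    | cons h p ih => exact ih (hSclosed _ hx _ h)
  set cs : Finset H.ConnectedComponent :=
    (Finset.univ.filter (fun x => x ∈ S)).image H.connectedComponentMk with hcs
  have mem_cs : ∀ x : V, H.connectedComponentMk x ∈ cs ↔ x ∈ S := by
    intro x
    simp only [hcs, Finset.mem_image, Finset.mem_filter, Finset.mem_univ, true_and]
    constructor
    · rintro ⟨x₀, hx₀, hmk⟩
      exact hSreach x₀ hx₀ x (SimpleGraph.ConnectedComponent.exact hmk)
    · exact fun hx => ⟨x, hx, rfl⟩
  set l := cs.toList with hl
  have hnd : l.Nodup := cs.nodup_toList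
  have hmemiff : ∀ (i : ℕ) (x : V),
      ((if H.connectedComponentMk x ∈ l.take i then Equiv.swap a b (φ x) else φ x) = a ∨
       (if H.connectedComponentMk x ∈ l.take i then Equiv.swap a b (φ x) else φ x) = b) ↔
      (φ x = a ∨ φ x = b) := by
    intro i x
    split
    · exact swap_mem_iff a b (φ x)
    · exact Iff.rfl
  have hksub : ∀ (τ : V → Fin k), (∀ x, (τ x = a ∨ τ x = b) ↔ (φ x = a ∨ φ x = b)) →
      kempeSub G τ a b = H := by
    intro τ hτ
    ext x y
    constructor
    · rintro ⟨h1, h2, h3⟩; exact ⟨h1, (hτ x).mp h2, (hτ y).mp h3⟩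
    · rintro ⟨h1, h2, h3⟩; exact ⟨h1, (hτ x).mpr h2, (hτ y).mpr h3⟩
  refine ⟨l.length,
    fun i x => if H.connectedComponentMk x ∈ l.take i then Equiv.swap a b (φ x) else φ x,
    ?_, ?_, ?_, ?_⟩
  · funext x; simp
  · funext x
    show (if H.connectedComponentMk x ∈ l.take l.length then Equiv.swap a b (φ x) else φ x)
      = ψ x
    rw [List.take_length]
    by_cases hx : x ∈ S
    · rw [if_pos ((Finset.mem_toList).mpr ((mem_cs x).mpr hx)), hψin x hx]
    · rw [if_neg (fun h => hx ((mem_cs x).mp (Finset.mem_toList.mp h))), hψout x hx]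
  · intro i hi
    have htake : l.take (i + 1) = l.take i ++ [l[i]'hi] := by
      rw [List.take_succ, List.getElem?_eq_getElem hi]; rfl
    have hcnot : l[i]'hi ∉ l.take i := by
      have hnd2 : (l.take (i + 1)).Nodup := hnd.sublist (List.take_sublist _ _)
      rw [htake] at hnd2
      exact fun hmem => (List.nodup_append'.mp hnd2).2.2 hmem (List.mem_singleton.mpr rfl)
    have hcmem : l[i]'hi ∈ cs := Finset.mem_toList.mp (List.getElem_mem _)
    obtain ⟨x₀, hx₀S, hx₀c⟩ : ∃ x, x ∈ S ∧ H.connectedComponentMk x = l[i]'hi := by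
      have h := hcmem
      simp only [hcs, Finset.mem_image, Finset.mem_filter, Finset.mem_univ, true_and] at h
      exact h
    refine ⟨hab, x₀, (hmemiff i x₀).mpr (hScol x₀ hx₀S), ?_, ?_⟩
    · intro y hy
      rw [hksub _ (hmemiff i)] at hy
      have hmky : H.connectedComponentMk y = l[i]'hi :=
        (SimpleGraph.ConnectedComponent.sound hy).symm.trans hx₀c
      have h1 : H.connectedComponentMk y ∉ l.take i := by rw [hmky]; exact hcnot
      have h2 : H.connectedComponentMk y ∈ l.take (i + 1) := by
        rw [htake, hmky]; exact List.mem_append_right _ (List.mem_singleton.mpr rfl)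
      simp only [if_pos h2, if_neg h1]
    · intro y hy
      rw [hksub _ (hmemiff i)] at hy
      have hmky : H.connectedComponentMk y ≠ l[i]'hi := by
        intro h
        exact hy (SimpleGraph.ConnectedComponent.exact (hx₀c.trans h.symm))
      by_cases h1 : H.connectedComponentMk y ∈ l.take i
      · have h2 : H.connectedComponentMk y ∈ l.take (i + 1) := by
          rw [htake]; exact List.mem_append_left _ h1
        simp only [if_pos h1, if_pos h2]
      · have h2 : H.connectedComponentMk y ∉ l.take (i + 1) := by
          rw [htake]
          intro h
          rcases List.mem_append.mp h with h | h
          · exact h1 h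
          · exact hmky (List.mem_singleton.mp h)
        simp only [if_neg h1, if_neg h2]
  · intro x
    unfold changeCount
    refine Finset.card_le_one.mpr ?_
    intro i hi j hj
    simp only [Finset.mem_filter, Finset.mem_range, ne_eq] at hi hj
    have key : ∀ (n : ℕ) (hn : n < l.length),
        ¬((if H.connectedComponentMk x ∈ l.take n then Equiv.swap a b (φ x) else φ x) =
          (if H.connectedComponentMk x ∈ l.take (n + 1) then Equiv.swap a b (φ x) else φ x)) →
        H.connectedComponentMk x = l[n]'hn := by
      intro n hn hne
      have htake : l.take (n + 1) = l.take n ++ [l[n]'hn] := by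
        rw [List.take_succ, List.getElem?_eq_getElem hn]; rfl
      by_cases h1 : H.connectedComponentMk x ∈ l.take n
      · have h2 : H.connectedComponentMk x ∈ l.take (n + 1) := by
          rw [htake]; exact List.mem_append_left _ h1
        rw [if_pos h1, if_pos h2] at hne; exact absurd rfl hne
      · by_cases h2 : H.connectedComponentMk x ∈ l.take (n + 1)
        · rw [htake] at h2
          rcases List.mem_append.mp h2 with h | h
          · exact absurd h h1
          · exact List.mem_singleton.mp h
        · rw [if_neg h1, if_neg h2] at hne; exact absurd rfl hne
    have e1 := key i hi.1 hi.2
    have e2 := key j hj.1 hj.2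
    exact (hnd.getElem_inj_iff).mp (e1.symm.trans e2)

/-- Let `G'` be obtained from `G` by identifying two distinct
nonadjacent vertices `u` and `w`, let `φ` be a proper `k`-coloring of `G` with
`φ u = φ w`, inducing the (proper) coloring `φ' = fun y => φ y` of `G'`.  If `ψ'` is
obtained from `φ'` by a single Kempe change in colors `{a, b}`, then the lifted coloring
`ψ = fun x => ψ' (image of x)` is a proper `k`-coloring of `G`, obtained from `φ` by a
sequence of Kempe changes in colors `{a, b}`; each vertex of `G` changes its color at
most once, and it changes its color iff its image in `G'` does. -/
theorem lift_single_kempe_change {V : Type*} [Fintype V] [DecidableEq V]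
    (G : SimpleGraph V) (k : ℕ) (u w : V) (huw : u ≠ w) (hnadj : ¬ G.Adj u w)
    (φ : V → Fin k) (hφ : IsProperColoring G k φ) (hc : φ u = φ w)
    (a b : Fin k) (ψ' : ↥{y : V | y ≠ w} → Fin k)
    (hstep : KempeStepAB ((mergeGraph G u w).induce {y : V | y ≠ w}) a b
      (fun y => φ y.val) ψ') :
    IsProperColoring ((mergeGraph G u w).induce {y : V | y ≠ w}) k
      (fun y => φ y.val) ∧
    IsProperColoring G k (fun x => ψ' (mergeTo u w huw x)) ∧
    (∀ x : V, ψ' (mergeTo u w huw x) ≠ φ x ↔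
      ψ' (mergeTo u w huw x) ≠ φ (mergeTo u w huw x).val) ∧
    ∃ (m : ℕ) (σ : ℕ → V → Fin k),
      σ 0 = φ ∧
      (σ m = fun x => ψ' (mergeTo u w huw x)) ∧
      (∀ i < m, KempeStepAB G a b (σ i) (σ (i + 1))) ∧
      (∀ x : V, changeCount m σ x ≤ 1) := by
  classical
  obtain ⟨hab, v', hv', hin, hout⟩ := hstep
  have key : ∀ x : V, φ (mergeTo u w huw x).val = φ x := by
    intro x
    unfold mergeTo
    split
    · rename_i h; subst h; exact hc
    · rfl
  have mergeTo_val : ∀ x : V, (mergeTo u w huw x).val = mergeMap u w x := by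
    intro x
    by_cases h : x = w <;> simp [mergeTo, mergeMap, h]
  have phi_mm : ∀ x : V, φ (mergeMap u w x) = φ x := by
    intro x
    unfold mergeMap
    split
    · rename_i h; subst h; exact hc
    · rfl
  have mm_ne : ∀ x y : V, G.Adj x y → mergeMap u w x ≠ mergeMap u w y := by
    intro x y hxy heq
    by_cases h1 : x = w <;> by_cases h2 : y = w
    · exact G.ne_of_adj hxy (h1.trans h2.symm)
    · simp only [mergeMap, if_pos h1, if_neg h2] at heq
      subst heq; subst h1
      exact hnadj hxy.symm
    · simp only [mergeMap, if_neg h1, if_pos h2] at heq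
      subst heq; subst h2
      exact hnadj hxy
    · simp only [mergeMap, if_neg h1, if_neg h2] at heq
      exact G.ne_of_adj hxy heq
  have hφ' : IsProperColoring ((mergeGraph G u w).induce {y : V | y ≠ w}) k
      (fun y => φ y.val) := by
    rintro ⟨p, hp⟩ ⟨q, hq⟩ hpq
    obtain ⟨hne, x, y, hxy, hx, hy⟩ := hpq
    intro e
    apply hφ hxy
    rw [← phi_mm x, ← phi_mm y, hx, hy]
    exact e
  have adj_lift : ∀ {x y : V}, G.Adj x y →
      ((mergeGraph G u w).induce {y : V | y ≠ w}).Adj (mergeTo u w huw x)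
        (mergeTo u w huw y) := by
    intro x y hxy
    show (mergeGraph G u w).Adj (mergeTo u w huw x).val (mergeTo u w huw y).val
    rw [mergeTo_val, mergeTo_val]
    exact ⟨mm_ne x y hxy, x, y, hxy, rfl, rfl⟩
  have hψ'p : IsProperColoring ((mergeGraph G u w).induce {y : V | y ≠ w}) k ψ' :=
    kempe_step_proper hφ' ⟨hab, v', hv', hin, hout⟩
  have hψproper : IsProperColoring G k (fun x => ψ' (mergeTo u w huw x)) :=
    fun x y hxy => hψ'p (adj_lift hxy)
  have part3 : ∀ x : V, ψ' (mergeTo u w huw x) ≠ φ x ↔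
      ψ' (mergeTo u w huw x) ≠ φ (mergeTo u w huw x).val := by
    intro x; rw [key x]
  set S : Set V := {x | (kempeSub ((mergeGraph G u w).induce {y : V | y ≠ w})
      (fun y => φ y.val) a b).Reachable v' (mergeTo u w huw x)} with hS
  have hScol : ∀ x ∈ S, φ x = a ∨ φ x = b := by
    intro x hx
    have h := kempe_color_mem hx hv'
    rw [← key x]
    exact h
  have hSclosed : ∀ x ∈ S, ∀ y, (kempeSub G φ a b).Adj x y → y ∈ S := by
    intro x hx y hxy
    refine hx.trans (SimpleGraph.Adj.reachable ?_)
    refine ⟨adj_lift hxy.1, ?_, ?_⟩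
    · show φ (mergeTo u w huw x).val = a ∨ φ (mergeTo u w huw x).val = b
      rw [key]; exact hxy.2.1
    · show φ (mergeTo u w huw y).val = a ∨ φ (mergeTo u w huw y).val = b
      rw [key]; exact hxy.2.2
  have hψSin : ∀ x ∈ S, ψ' (mergeTo u w huw x) = Equiv.swap a b (φ x) := by
    intro x hx
    rw [hin _ hx]
    exact congrArg _ (key x)
  have hψSout : ∀ x ∉ S, ψ' (mergeTo u w huw x) = φ x := by
    intro x hx
    rw [hout _ hx]
    exact key x
  obtain ⟨m, σ, h0, hm, hsteps, hcc⟩ :=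
    exists_kempe_seq G φ a b hab S hScol hSclosed (fun x => ψ' (mergeTo u w huw x))
      hψSin hψSout
  exact ⟨hφ', hψproper, part3, m, σ, h0, hm, hsteps, hcc⟩
end
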